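/- Let G be a graph, P an induced path in G, and x a vertex of G not on P such that G − V(P) − x has exactly t connected components, and x has at least (m+2)·n^t neighbors on P. Then either G has a K_{2,n}-minor, or P has a subpath P* such that x has at least m neighbors in P* and no vertex outside V(P) ∪ {x} has a neighbor in P*. -/

import Mathlib

open SimpleGraph

/-- `H` is a minor of `G`. -/
def IsMinor {V W : Type*} (G : SimpleGraph V) (H : SimpleGraph W) : Prop :=
  ∃ f : W → Set V,
    (∀ w, (f w).Nonempty) ∧
    (∀ w, (G.induce (f w)).Connected) ∧
    (∀ w₁ w₂, w₁ ≠ w₂ → Disjoint (f w₁) (f w₂)) ∧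
    (∀ w₁ w₂, H.Adj w₁ w₂ → ∃ v₁ ∈ f w₁, ∃ v₂ ∈ f w₂, G.Adj v₁ v₂)

open SimpleGraph

section helpers

variable {V : Type} {G : SimpleGraph V}

lemma head_le_of_sorted {α : Type} [Preorder α] {l : List α} (hs : l.Pairwise (· < ·))
    (hne : l ≠ []) {a : α} (ha : a ∈ l) : l.head hne ≤ a := by
  cases l with
  | nil => exact absurd rfl hne
  | cons x xs =>
    rcases List.mem_cons.mp ha with rfl | h
    · exact le_rfl
    · exact ((List.pairwise_cons.mp hs).1 _ h).le

lemma le_getLast_of_sorted {α : Type} [Preorder α] :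
    ∀ {l : List α}, l.Pairwise (· < ·) → ∀ (hne : l ≠ []) {a : α}, a ∈ l → a ≤ l.getLast hne := by
  intro l
  induction l with
  | nil => intro _ hne; exact absurd rfl hne
  | cons y ys ih =>
    intro hs hne a ha
    cases ys with
    | nil =>
      simp only [List.mem_singleton] at ha
      simp [ha]
    | cons z zs =>
      rw [List.getLast_cons (by simp)]
      rcases List.mem_cons.mp ha with rfl | h
      · exact ((List.pairwise_cons.mp hs).1 _ (List.getLast_mem _)).le
      · exact ih (List.pairwise_cons.mp hs).2 (by simp) h

lemma sorted_getElem_lt {α : Type} [Preorder α] {l : List α} (hs : l.Pairwise (· < ·))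
    {p q : ℕ} (hpq : p < q) (hq : q < l.length) :
    l[p]'(lt_trans hpq hq) < l[q] :=
  List.pairwise_iff_getElem.mp hs p q _ _ hpq

lemma sorted_getElem_le {α : Type} [Preorder α] {l : List α} (hs : l.Pairwise (· < ·))
    {p q : ℕ} (hpq : p ≤ q) (hq : q < l.length) :
    l[p]'(lt_of_le_of_lt hpq hq) ≤ l[q] := by
  rcases eq_or_lt_of_le hpq with rfl | h
  · exact le_rfl
  · exact (sorted_getElem_lt hs h hq).le

lemma mem_slice {α : Type} {l : List α} {i j : ℕ} (hj : j < l.length) (hij : i ≤ j) {w : α} :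
    w ∈ (l.drop i).take (j + 1 - i) ↔ ∃ r, i ≤ r ∧ r ≤ j ∧ ∃ h : r < l.length, w = l[r] := by
  have hlen : ((l.drop i).take (j + 1 - i)).length = j + 1 - i := by
    simp only [List.length_take, List.length_drop]
    omega
  constructor
  · intro hw
    obtain ⟨d, hd, hget⟩ := List.mem_iff_getElem.mp hw
    rw [hlen] at hd
    refine ⟨i + d, by omega, by omega, by omega, ?_⟩
    rw [← hget, List.getElem_take, List.getElem_drop]
  · rintro ⟨r, hir, hrj, hr, rfl⟩
    apply List.mem_iff_getElem.mpr
    refine ⟨r - i, by omega, ?_⟩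
    rw [List.getElem_take, List.getElem_drop]
    congr 1
    omega

lemma slice_isInfix {α : Type} (l : List α) (i c : ℕ) : (l.drop i).take c <:+: l :=
  (List.take_prefix _ _).isInfix.trans ((List.drop_suffix _ _).isInfix)

lemma exists_walk_of_chain' :
    ∀ (l : List V), l ≠ [] → l.Chain' G.Adj →
      ∃ (a b : V) (W : G.Walk a b), W.support = l := by
  intro l
  induction l with
  | nil => simp
  | cons u l ih =>
    intro _ hc
    cases l with
    | nil => exact ⟨u, u, Walk.nil, by simp⟩
    | cons v l' =>
      obtain ⟨a, b, W, hW⟩ := ih (by simp) (List.isChain_cons_cons.mp hc).2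
      have ha : v = a := by
        have h2 := W.support_eq_cons
        rw [hW] at h2
        exact (List.cons_eq_cons.mp h2).1
      subst ha
      exact ⟨u, b, Walk.cons (List.isChain_cons_cons.mp hc).1 W, by simp [hW]⟩

lemma edges_iff_infix {a b : V} (W : G.Walk a b) (e : Sym2 V) :
    e ∈ W.edges ↔ ∃ p q, e = s(p, q) ∧ [p, q] <:+: W.support := by
  induction W with
  | nil =>
    simp only [Walk.edges_nil, List.not_mem_nil, false_iff, not_exists]
    rintro p q ⟨rfl, h⟩
    have := h.sublist.length_le
    simp at this
  | @cons c d f h W ih =>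
    rw [Walk.edges_cons, Walk.support_cons]
    constructor
    · intro he
      rcases List.mem_cons.mp he with rfl | he
      · exact ⟨c, d, rfl, by
          rw [W.support_eq_cons]
          exact ⟨[], W.support.tail, by simp⟩⟩
      · obtain ⟨p, q, rfl, hpq⟩ := ih.mp he
        exact ⟨p, q, rfl, hpq.trans ((List.suffix_cons c _).isInfix)⟩
    · rintro ⟨p, q, rfl, hpq⟩
      rcases List.infix_cons_iff.mp hpq with hpre | hinf
      · obtain ⟨rfl, h2⟩ := List.cons_prefix_cons.mp hpre
        have : q = d := by
          rw [W.support_eq_cons] at h2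
          exact (List.cons_prefix_cons.mp h2).1
        subst this
        exact List.mem_cons_self
      · exact List.mem_cons_of_mem _ (ih.mpr ⟨p, q, rfl, hinf⟩)

lemma reachable_induce_of_walk (T : Set V) :
    ∀ {a b : V} (W : G.Walk a b), (∀ z ∈ W.support, z ∈ T) →
      ∀ (ha : a ∈ T) (hb : b ∈ T), (G.induce T).Reachable ⟨a, ha⟩ ⟨b, hb⟩ := by
  intro a b W
  induction W with
  | nil => intro _ ha hb; rfl
  | @cons c d f h W ih =>
    intro hsup ha hb
    have hd : d ∈ T := hsup d (by simp)
    have hadj : (G.induce T).Adj ⟨c, ha⟩ ⟨d, hd⟩ := h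
    exact hadj.reachable.trans (ih (fun z hz => hsup z (by simp [hz])) hd hb)

lemma connected_induce_support {a b : V} (W : G.Walk a b) :
    (G.induce {z | z ∈ W.support}).Connected := by
  classical
  rw [connected_iff]
  constructor
  · rintro ⟨c, hc⟩ ⟨d, hd⟩
    have h1 := reachable_induce_of_walk {z | z ∈ W.support} (W.takeUntil c hc)
      (fun z hz => Walk.support_takeUntil_subset _ _ hz) W.start_mem_support hc
    have h2 := reachable_induce_of_walk {z | z ∈ W.support} (W.takeUntil d hd)
      (fun z hz => Walk.support_takeUntil_subset _ _ hz) W.start_mem_support hd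
    exact h1.symm.trans h2
  · exact ⟨⟨a, W.start_mem_support⟩⟩

lemma connected_induce_component {S : Set V} (c : (G.induce S).ConnectedComponent) :
    (G.induce (Subtype.val '' c.supp)).Connected := by
  classical
  rw [connected_iff]
  constructor
  · rintro ⟨y, p, hp, rfl⟩ ⟨z, q, hq, rfl⟩
    rw [ConnectedComponent.mem_supp_iff] at hp hq
    obtain ⟨W⟩ := ConnectedComponent.exact (hp.trans hq.symm)
    have hWsup : ∀ u ∈ W.support, u ∈ c.supp := by
      intro u hu
      rw [ConnectedComponent.mem_supp_iff, ← hp]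
      exact ConnectedComponent.sound ⟨(W.takeUntil u hu).reverse⟩
    have hmem : ∀ w ∈ (W.map (SimpleGraph.Embedding.induce S).toHom).support,
        w ∈ Subtype.val '' c.supp := by
      intro w hw
      rw [Walk.support_map, List.mem_map] at hw
      obtain ⟨u, hu, rfl⟩ := hw
      exact ⟨u, hWsup u hu, rfl⟩
    exact reachable_induce_of_walk (Subtype.val '' c.supp) (W.map (SimpleGraph.Embedding.induce S).toHom)
      hmem (hmem _ (Walk.start_mem_support _)) (hmem _ (Walk.end_mem_support _))
  · obtain ⟨p, hp⟩ := c.exists_rep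
    exact ⟨⟨p, p, (ConnectedComponent.mem_supp_iff c p).mpr hp, rfl⟩⟩

end helpers

lemma comb {α : Type} [LinearOrder α] {C : Type} (n m : ℕ) (hn : 1 ≤ n) (hm : 1 ≤ m)
    (B : C → α → Prop) :
    ∀ (cs : List C) (A : List α), A.Pairwise (· < ·) →
      (m + 2) * n ^ cs.length ≤ A.length →
      (∃ c ∈ cs, ∃ I : Fin n → α × α,
          (∀ k, (I k).1 ∈ A) ∧
          (∀ k, ∃ b, B c b ∧ (I k).1 ≤ b ∧ b ≤ (I k).2) ∧
          (∀ k l : Fin n, k < l → (I k).2 < (I l).1)) ∨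
      (∃ i ∈ A, ∃ j ∈ A, i ≤ j ∧
          m ≤ (A.filter (fun a => decide (i ≤ a ∧ a ≤ j))).length ∧
          ∀ c ∈ cs, ∀ b, B c b → ¬(i ≤ b ∧ b ≤ j)) := by
  intro cs
  induction cs with
  | nil =>
    intro A hs hlen
    right
    simp only [List.length_nil, pow_zero, mul_one] at hlen
    have hne : A ≠ [] := by
      intro h
      rw [h] at hlen
      simp at hlen
    refine ⟨A.head hne, List.head_mem hne, A.getLast hne, List.getLast_mem hne,
      head_le_of_sorted hs hne (List.getLast_mem hne), ?_, by simp⟩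
    have : A.filter (fun a => decide (A.head hne ≤ a ∧ a ≤ A.getLast hne)) = A := by
      apply List.filter_eq_self.mpr
      intro a ha
      simp only [decide_eq_true_eq]
      exact ⟨head_le_of_sorted hs hne ha, le_getLast_of_sorted hs hne ha⟩
    rw [this]
    omega
  | cons c cs IH =>
    intro A hs hlen
    set s := (m + 2) * n ^ cs.length with hsdef
    have hs1 : 1 ≤ s := by
      have : 1 ≤ n ^ cs.length := Nat.one_le_pow _ _ (by omega)
      calc 1 ≤ (m + 2) * 1 := by omega
        _ ≤ s := by rw [hsdef]; exact Nat.mul_le_mul_left _ this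
    have hns : n * s ≤ A.length := by
      have he : n * s = (m + 2) * n ^ (cs.length + 1) := by rw [hsdef, pow_succ]; ring
      rw [List.length_cons] at hlen
      omega
    have hidx : ∀ k : Fin n, (k : ℕ) * s + (s - 1) < A.length := by
      intro k
      have hk : ((k : ℕ) + 1) * s ≤ n * s := Nat.mul_le_mul_right s k.isLt
      have : ((k : ℕ) + 1) * s = (k : ℕ) * s + s := by ring
      omega
    have hidx0 : ∀ k : Fin n, (k : ℕ) * s < A.length := fun k => by
      have := hidx k; omega
    by_cases hcase : ∀ k : Fin n, ∃ b, B c b ∧ A[(k : ℕ) * s]'(hidx0 k) ≤ b ∧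
        b ≤ A[(k : ℕ) * s + (s - 1)]'(hidx k)
    · left
      refine ⟨c, List.mem_cons_self,
        fun k => (A[(k : ℕ) * s]'(hidx0 k), A[(k : ℕ) * s + (s - 1)]'(hidx k)),
        fun k => List.getElem_mem _, hcase, ?_⟩
      intro k l hkl
      apply sorted_getElem_lt hs
      have h1 : ((k : ℕ) + 1) * s ≤ (l : ℕ) * s := Nat.mul_le_mul_right s hkl
      have : ((k : ℕ) + 1) * s = (k : ℕ) * s + s := by ring
      omega
    · push_neg at hcase
      obtain ⟨k, hk⟩ := hcase
      set A' := (A.drop ((k : ℕ) * s)).take s with hA'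
      have hsubl : List.Sublist A' A := (List.take_sublist _ _).trans (List.drop_sublist _ _)
      have hs' : A'.Pairwise (· < ·) := hs.sublist hsubl
      have hlen' : A'.length = s := by
        rw [hA']
        simp only [List.length_take, List.length_drop]
        have := hidx k
        omega
      have hgetA' : ∀ (d : ℕ) (hd : d < s), A'[d]'(by omega) =
          A[(k : ℕ) * s + d]'(by have := hidx k; omega) := by
        intro d hd
        simp only [hA', List.getElem_take, List.getElem_drop]
      have hmemA' : ∀ a ∈ A', A[(k : ℕ) * s]'(hidx0 k) ≤ a ∧
          a ≤ A[(k : ℕ) * s + (s - 1)]'(hidx k) := by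
        intro a ha
        obtain ⟨d, hd, hget⟩ := List.mem_iff_getElem.mp ha
        rw [hlen'] at hd
        rw [hgetA' d hd] at hget
        subst hget
        constructor
        · exact sorted_getElem_le hs (by omega) (by have := hidx k; omega)
        · exact sorted_getElem_le hs (by omega) (hidx k)
      rcases IH A' hs' (by omega) with hL | hR
      · left
        obtain ⟨c', hc', I, h1, h2, h3⟩ := hL
        exact ⟨c', List.mem_cons_of_mem _ hc', I, fun k => hsubl.subset (h1 k), h2, h3⟩
      · right
        obtain ⟨i, hi, j, hj, hij, hcount, hB⟩ := hR
        refine ⟨i, hsubl.subset hi, j, hsubl.subset hj, hij, ?_, ?_⟩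
        · exact le_trans hcount (List.Sublist.length_le (hsubl.filter _))
        · intro c' hc' b hb hbet
          rcases List.mem_cons.mp hc' with rfl | hc'
          · exact (hk b hb (le_trans (hmemA' i hi).1 hbet.1)).not_ge
              (le_trans hbet.2 (hmemA' j hj).2)
          · exact hB c' hc' b hb hbet

/-- If `P` is an induced path of `G`, `x ∉ V(P)`, `G - V(P) - x` has exactly `t`
components, and `x` has at least `(m+2)·n^t` neighbors on `P`, then either `G`
has a `K_{2,n}`-minor or `P` has a subpath `P*` such that `x` has at least `m`
neighbors in `P*` and no vertex outside `V(P) ∪ {x}` has a neighbor in `P*`. -/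
theorem subpath_of_many_neighbors {V : Type} [Fintype V] (G : SimpleGraph V)
    (n m t : ℕ) (hn : 2 ≤ n) (hm : 1 ≤ m)
    (u v : V) (P : G.Walk u v) (hP : P.IsPath)
    (hind : ∀ a ∈ P.support, ∀ b ∈ P.support, G.Adj a b → s(a, b) ∈ P.edges)
    (x : V) (hx : x ∉ P.support)
    (ht : Nat.card ((G.induce {w : V | w ∉ P.support ∧ w ≠ x}).ConnectedComponent) = t)
    (hnb : (m + 2) * n ^ t ≤ (G.neighborSet x ∩ {w | w ∈ P.support}).ncard) :
    IsMinor G (completeBipartiteGraph (Fin 2) (Fin n)) ∨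
    ∃ (a b : V) (P' : G.Walk a b), P'.IsPath ∧
      (∀ w, w ∈ P'.support → w ∈ P.support) ∧
      (∀ e, e ∈ P'.edges → e ∈ P.edges) ∧
      m ≤ (G.neighborSet x ∩ {w | w ∈ P'.support}).ncard ∧
      (∀ w : V, w ∉ P.support → w ≠ x → ∀ z ∈ P'.support, ¬ G.Adj w z) := by
    classical
  set S' : Set V := {w : V | w ∉ P.support ∧ w ≠ x} with hS'
  set L : List V := P.support with hLdef
  set A : List (Fin L.length) :=
    (List.finRange L.length).filter (fun i => decide (G.Adj x (L.get i))) with hAdef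
  have hAsorted : A.Pairwise (· < ·) :=
    List.Pairwise.sublist List.filter_sublist (List.pairwise_lt_finRange _)
  have hAmem : ∀ i ∈ A, G.Adj x (L.get i) := by
    intro i hi
    have := (List.mem_filter.mp hi).2
    simpa using this
  have hAnodup : A.Nodup := (List.nodup_finRange _).filter _
  have hLnodup : L.Nodup := hP.support_nodup
  have hLchain : L.Chain' G.Adj := P.isChain_adj_support
  haveI : Fintype ((G.induce S').ConnectedComponent) := Fintype.ofFinite _
  set cs := (Finset.univ : Finset ((G.induce S').ConnectedComponent)).toList with hcs
  have hcslen : cs.length = t := by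
    rw [hcs, Finset.length_toList, Finset.card_univ, ← Nat.card_eq_fintype_card]
    exact ht
  have hcsmem : ∀ c, c ∈ cs := fun c => by simp [hcs]
  set B : (G.induce S').ConnectedComponent → Fin L.length → Prop :=
    fun c i => ∃ w, ∃ hw : w ∈ S',
      (G.induce S').connectedComponentMk ⟨w, hw⟩ = c ∧ G.Adj w (L.get i) with hBdef
  have hlenA : (m + 2) * n ^ cs.length ≤ A.length := by
    have h1 : (G.neighborSet x ∩ {w | w ∈ L}) ⊆ {w | w ∈ A.map L.get} := by
      rintro w ⟨hadj, hw⟩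
      obtain ⟨iF, higet⟩ := List.mem_iff_get.mp hw
      refine List.mem_map.mpr ⟨iF, List.mem_filter.mpr ⟨List.mem_finRange _, ?_⟩, higet⟩
      rw [decide_eq_true_eq, higet]
      exact hadj
    have h2 : (G.neighborSet x ∩ {w | w ∈ L}).ncard ≤ A.length := by
      calc (G.neighborSet x ∩ {w | w ∈ L}).ncard
          ≤ ({w | w ∈ A.map L.get} : Set V).ncard := Set.ncard_le_ncard h1 (Set.toFinite _)
        _ ≤ (A.map L.get).length := by
            rw [← List.coe_toFinset, Set.ncard_coe_finset]
            exact (A.map L.get).toFinset_card_le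
        _ = A.length := List.length_map _
    rw [hcslen]
    exact le_trans hnb h2
  rcases comb n m (by omega) hm B cs A hAsorted hlenA with
    ⟨c, -, I, hIA, hIB, hsep⟩ | ⟨i, hiA, j, hjA, hij, hcount, hnoB⟩
  · -- minor case
    left
    have hIle : ∀ k, (I k).1 ≤ (I k).2 := fun k => by
      obtain ⟨b, _, h1, h2⟩ := hIB k
      exact le_trans h1 h2
    set slc : Fin n → List V :=
      fun k => (L.drop ((I k).1 : ℕ)).take (((I k).2 : ℕ) + 1 - ((I k).1 : ℕ)) with hslc
    have hmem_slc : ∀ (k : Fin n) (w : V), w ∈ slc k ↔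
        ∃ r : ℕ, ((I k).1 : ℕ) ≤ r ∧ r ≤ ((I k).2 : ℕ) ∧ ∃ h : r < L.length, w = L[r] :=
      fun k w => mem_slice (I k).2.isLt (hIle k)
    have hslc_subL : ∀ (k : Fin n) (w : V), w ∈ slc k → w ∈ L := by
      intro k w hw
      obtain ⟨r, _, _, hr, rfl⟩ := (hmem_slc k w).mp hw
      exact List.getElem_mem _
    have hlo_mem : ∀ k : Fin n, L.get (I k).1 ∈ slc k := by
      intro k
      refine (hmem_slc k _).mpr ⟨((I k).1 : ℕ), le_rfl, hIle k, (I k).1.isLt, ?_⟩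
      simp [List.get_eq_getElem]
    have hinj : Function.Injective L.get := List.nodup_iff_injective_get.mp hLnodup
    have hdisj_slc : ∀ k k' : Fin n, k < k' →
        Disjoint {w | w ∈ slc k} {w | w ∈ slc k'} := by
      intro k k' hkk'
      rw [Set.disjoint_left]
      rintro y hy hy'
      obtain ⟨r, h1, h2, hr, rfl⟩ := (hmem_slc k y).mp hy
      obtain ⟨r', h1', h2', hr', he⟩ := (hmem_slc k' _).mp hy'
      have hsep' : (((I k).2 : ℕ)) < ((I k').1 : ℕ) := hsep k k' hkk'
      have hrr : r = r' := by
        have h := hinj (a₁ := ⟨r, hr⟩) (a₂ := ⟨r', hr'⟩)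
          (by simpa [List.get_eq_getElem] using he)
        exact Fin.mk_eq_mk.mp h
      omega
    have hcompS : ∀ y ∈ Subtype.val '' c.supp, y ∈ S' := by
      rintro y ⟨q, hq, rfl⟩
      exact q.2
    refine ⟨Sum.elim
      (fun a : Fin 2 => if a = 0 then {x} else Subtype.val '' c.supp)
      (fun k => {w | w ∈ slc k}), ?_, ?_, ?_, ?_⟩
    · rintro (a | k)
      · by_cases h0 : a = 0
        · simp [h0]
        · obtain ⟨p, hp⟩ := c.exists_rep
          rw [Sum.elim_inl, if_neg h0]
          exact ⟨p, ⟨p, (ConnectedComponent.mem_supp_iff c p).mpr hp, rfl⟩⟩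
      · exact ⟨L.get (I k).1, hlo_mem k⟩
    · rintro (a | k)
      · by_cases h0 : a = 0
        · rw [Sum.elim_inl, if_pos h0]
          have h := connected_induce_support (Walk.nil : G.Walk x x)
          have he : {z | z ∈ (Walk.nil : G.Walk x x).support} = ({x} : Set V) := by
            ext z; simp
          rwa [he] at h
        · rw [Sum.elim_inl, if_neg h0]
          exact connected_induce_component c
      · simp only [Sum.elim_inr]
        obtain ⟨a₀, b₀, Wk, hWk⟩ := exists_walk_of_chain' (slc k)
          (List.ne_nil_of_mem (hlo_mem k)) (hLchain.infix (slice_isInfix L _ _))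
        have h := connected_induce_support Wk
        rwa [hWk] at h
    · rintro (a | k) (a' | k') hne
      · -- inl inl
        have hxS : x ∉ Subtype.val '' c.supp := fun h => (hcompS x h).2 rfl
        have hd : Disjoint ({x} : Set V) (Subtype.val '' c.supp) := by
          rw [Set.disjoint_left]
          rintro y hy hy'
          rw [Set.mem_singleton_iff] at hy
          subst hy
          exact hxS hy'
        by_cases h0 : a = 0 <;> by_cases h0' : a' = 0
        · exact absurd (congrArg Sum.inl (h0.trans h0'.symm)) hne
        · rw [Sum.elim_inl, Sum.elim_inl, if_pos h0, if_neg h0']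
          exact hd
        · rw [Sum.elim_inl, Sum.elim_inl, if_neg h0, if_pos h0']
          exact hd.symm
        · have hv : a.val ≠ 0 := fun hv => h0 (Fin.ext hv)
          have hv' : a'.val ≠ 0 := fun hv => h0' (Fin.ext hv)
          have h2 := a.isLt
          have h2' := a'.isLt
          exact absurd (congrArg Sum.inl (Fin.ext (by omega) : a = a')) hne
      · -- inl inr
        simp only [Sum.elim_inl, Sum.elim_inr]
        rw [Set.disjoint_left]
        intro y hy hy'
        have hyL : y ∈ L := hslc_subL k' y hy'
        by_cases h0 : a = 0
        · rw [if_pos h0, Set.mem_singleton_iff] at hy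
          subst hy
          exact hx hyL
        · rw [if_neg h0] at hy
          exact (hcompS y hy).1 hyL
      · -- inr inl
        simp only [Sum.elim_inl, Sum.elim_inr]
        rw [Set.disjoint_right]
        intro y hy hy'
        have hyL : y ∈ L := hslc_subL k y hy'
        by_cases h0 : a' = 0
        · rw [if_pos h0, Set.mem_singleton_iff] at hy
          subst hy
          exact hx hyL
        · rw [if_neg h0] at hy
          exact (hcompS y hy).1 hyL
      · -- inr inr
        simp only [Sum.elim_inr]
        rcases lt_trichotomy k k' with h | h | h
        · exact hdisj_slc k k' h
        · exact absurd (congrArg Sum.inr h) hne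
        · exact (hdisj_slc k' k h).symm
    · rintro (a | k) (a' | k') hadj
      · simp [completeBipartiteGraph] at hadj
      · -- inl a, inr k'
        by_cases h0 : a = 0
        · refine ⟨x, ?_, L.get (I k').1, hlo_mem k', hAmem _ (hIA k')⟩
          simp [h0]
        · obtain ⟨b, hb, hb1, hb2⟩ := hIB k'
          obtain ⟨w, hwS, hmk, hwadj⟩ := hb
          refine ⟨w, ?_, L.get b, ?_, hwadj⟩
          · rw [Sum.elim_inl, if_neg h0]
            exact ⟨⟨w, hwS⟩, (ConnectedComponent.mem_supp_iff _ _).mpr hmk, rfl⟩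
          · simp only [Sum.elim_inr]
            exact (hmem_slc k' _).mpr ⟨(b : ℕ), hb1, hb2, b.isLt, by simp [List.get_eq_getElem]⟩
      · -- inr k, inl a'
        by_cases h0 : a' = 0
        · refine ⟨L.get (I k).1, hlo_mem k, x, ?_, (hAmem _ (hIA k)).symm⟩
          simp [h0]
        · obtain ⟨b, hb, hb1, hb2⟩ := hIB k
          obtain ⟨w, hwS, hmk, hwadj⟩ := hb
          refine ⟨L.get b, ?_, w, ?_, hwadj.symm⟩
          · simp only [Sum.elim_inr]
            exact (hmem_slc k _).mpr ⟨(b : ℕ), hb1, hb2, b.isLt, by simp [List.get_eq_getElem]⟩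
          · rw [Sum.elim_inl, if_neg h0]
            exact ⟨⟨w, hwS⟩, (ConnectedComponent.mem_supp_iff _ _).mpr hmk, rfl⟩
      · simp [completeBipartiteGraph] at hadj
  · -- subpath case
    right
    have hijN : (i : ℕ) ≤ (j : ℕ) := hij
    have hjlen : (j : ℕ) < L.length := j.isLt
    set l' : List V := (L.drop (i : ℕ)).take ((j : ℕ) + 1 - (i : ℕ)) with hl'
    have hmem_l' : ∀ w : V, w ∈ l' ↔
        ∃ r : ℕ, (i : ℕ) ≤ r ∧ r ≤ (j : ℕ) ∧ ∃ h : r < L.length, w = L[r] :=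
      fun w => mem_slice hjlen hijN
    have hne : l' ≠ [] := by
      have hmem : L.get i ∈ l' := by
        refine (hmem_l' _).mpr ⟨(i : ℕ), le_rfl, hijN, i.isLt, ?_⟩
        simp [List.get_eq_getElem]
      exact List.ne_nil_of_mem hmem
    have hinfix : l' <:+: L := slice_isInfix L _ _
    have hchain : l'.Chain' G.Adj := hLchain.infix hinfix
    obtain ⟨a, b, W, hWsup⟩ := exists_walk_of_chain' l' hne hchain
    have hWsub : ∀ w ∈ W.support, w ∈ L := by
      intro w hw
      rw [hWsup] at hw
      exact hinfix.subset hw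
    refine ⟨a, b, W, ?_, hWsub, ?_, ?_, ?_⟩
    · rw [SimpleGraph.Walk.isPath_def, hWsup]
      exact hLnodup.sublist hinfix.sublist
    · intro e he
      obtain ⟨p, q, rfl, hpq⟩ := (edges_iff_infix W e).mp he
      rw [hWsup] at hpq
      exact (edges_iff_infix P _).mpr ⟨p, q, rfl, hpq.trans hinfix⟩
    · -- counting
      set F := A.filter (fun a => decide (i ≤ a ∧ a ≤ j)) with hF
      have hinj : Function.Injective L.get := List.nodup_iff_injective_get.mp hLnodup
      have hFnd : (F.map L.get).Nodup := (hAnodup.filter _).map hinj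
      have hsub2 : {w | w ∈ F.map L.get} ⊆ G.neighborSet x ∩ {w | w ∈ W.support} := by
        rintro w hw
        obtain ⟨r, hr, rfl⟩ := List.mem_map.mp hw
        obtain ⟨hrA, hrij⟩ := List.mem_filter.mp hr
        rw [decide_eq_true_eq] at hrij
        refine ⟨hAmem r hrA, ?_⟩
        show L.get r ∈ W.support
        rw [hWsup]
        exact (hmem_l' _).mpr ⟨(r : ℕ), hrij.1, hrij.2, r.isLt, by simp [List.get_eq_getElem]⟩
      calc m ≤ F.length := hcount
        _ = (F.map L.get).length := (List.length_map _).symm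
        _ = ({w | w ∈ F.map L.get} : Set V).ncard := by
            rw [← List.coe_toFinset, Set.ncard_coe_finset, List.toFinset_card_of_nodup hFnd]
        _ ≤ _ := Set.ncard_le_ncard hsub2 (Set.toFinite _)
    · intro w hw hwx z hz hadj
      have hzl : z ∈ l' := by
        rw [hWsup] at hz
        exact hz
      obtain ⟨r, hir, hrj, hrlen, rfl⟩ := (hmem_l' z).mp hzl
      exact hnoB _ (hcsmem _) ⟨r, hrlen⟩
        ⟨w, ⟨hw, hwx⟩, rfl, by simpa [List.get_eq_getElem] using hadj⟩ ⟨hir, hrj⟩
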